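/- Let q ∈ (0,1) and let A be a unital C*-algebra with element z satisfying z*z = q² z z* + (1−q²)·1. Then ‖z‖ ≤ 1. -/

import Mathlib

/-- in a unital C*-algebra, z*z = q² zz* + (1−q²)·1 implies ‖z‖ ≤ 1. -/
theorem norm_le_one_of_qrel (q : ℝ) (hq : 0 < q) (hq1 : q < 1)
    {A : Type*} [NormedRing A] [StarRing A] [CStarRing A] [CompleteSpace A]
    [NormedAlgebra ℂ A] [StarModule ℂ A] [NormOneClass A]
    (z : A) (hz : star z * z = ((q : ℂ) ^ 2) • (z * star z) + ((1 : ℂ) - (q : ℂ) ^ 2) • 1) :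
    ‖z‖ ≤ 1 := by
  have key : ‖z‖ ^ 2 ≤ q ^ 2 * ‖z‖ ^ 2 + (1 - q ^ 2) := by
    have h1 : ‖star z * z‖ = ‖z‖ ^ 2 := by
      rw [CStarRing.norm_star_mul_self, sq]
    have h2 : ‖z * star z‖ = ‖z‖ ^ 2 := by
      rw [CStarRing.norm_self_mul_star, sq]
    calc ‖z‖ ^ 2 = ‖star z * z‖ := h1.symm
      _ = ‖((q : ℂ) ^ 2) • (z * star z) + ((1 : ℂ) - (q : ℂ) ^ 2) • 1‖ := by rw [hz]
      _ ≤ ‖((q : ℂ) ^ 2) • (z * star z)‖ + ‖((1 : ℂ) - (q : ℂ) ^ 2) • (1 : A)‖ :=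
          norm_add_le _ _
      _ ≤ q ^ 2 * ‖z‖ ^ 2 + (1 - q ^ 2) := by
          rw [norm_smul, norm_smul, h2, norm_one, mul_one]
          gcongr
          · simp [abs_of_nonneg (sq_nonneg q)]
          · have : ((1 : ℂ) - (q : ℂ) ^ 2) = ((1 - q ^ 2 : ℝ) : ℂ) := by push_cast; ring
            rw [this, Complex.norm_real]
            simp [abs_of_nonneg (by nlinarith : (0:ℝ) ≤ 1 - q ^ 2)]
  by_contra h
  push_neg at h
  have hq2 : q ^ 2 < 1 := by nlinarith
  have h3 : 1 < ‖z‖ ^ 2 := by nlinarith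
  nlinarith [key, h3, hq2]
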